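/- arXiv:1707.09712 — 4 statements merged into one kernel-verified Lean document; each statement's English description precedes it below -/
import Mathlib

section
/- The dual lattice L' of L (with respect to the bilinear form (X,Y) = -p·tr(XY)) is exactly the set of matrices [[b/(2p), -a/p],[c, -b/(2p)]] with a, b, c ∈ ℤ. -/
open Matrix

/-- Let `p` be a prime, let `V` be the space of trace-zero `2 × 2` rational
matrices with quadratic form `Q(X) = p·det X` and bilinear form `(X, Y) = -p·tr(X·Y)`, and let
`L` be the lattice of matrices `[[b, -a/p], [c, -b]]` with `a, b, c ∈ ℤ`.  Then the dual lattice
`L' = {x ∈ V : (x, l) ∈ ℤ for all l ∈ L}` is exactly the set of matrices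
`[[b/(2p), -a/p], [c, -b/(2p)]]` with `a, b, c ∈ ℤ`. -/
theorem dual_lattice_eq (p : ℕ) (hp : p.Prime) :
    {x : Matrix (Fin 2) (Fin 2) ℚ | x.trace = 0 ∧
        ∀ l ∈ {y : Matrix (Fin 2) (Fin 2) ℚ |
            ∃ a b c : ℤ, y = !![(b : ℚ), -(a : ℚ) / p; (c : ℚ), -(b : ℚ)]},
          ∃ n : ℤ, -(p : ℚ) * (x * l).trace = (n : ℚ)} =
    {x : Matrix (Fin 2) (Fin 2) ℚ |
        ∃ a b c : ℤ, x = !![(b : ℚ) / (2 * p), -(a : ℚ) / p; (c : ℚ), -(b : ℚ) / (2 * p)]} := by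
  have hp0 : (p : ℚ) ≠ 0 := Nat.cast_ne_zero.mpr hp.pos.ne'
  ext x
  simp only [Set.mem_setOf_eq]
  constructor
  · rintro ⟨htr, h⟩
    rw [Matrix.trace_fin_two] at htr
    obtain ⟨n1, hn1⟩ := h !![((0:ℤ):ℚ), -((1:ℤ):ℚ)/p; ((0:ℤ):ℚ), -((0:ℤ):ℚ)] ⟨1, 0, 0, rfl⟩
    obtain ⟨n2, hn2⟩ := h !![((1:ℤ):ℚ), -((0:ℤ):ℚ)/p; ((0:ℤ):ℚ), -((1:ℤ):ℚ)] ⟨0, 1, 0, rfl⟩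
    obtain ⟨n3, hn3⟩ := h !![((0:ℤ):ℚ), -((0:ℤ):ℚ)/p; ((1:ℤ):ℚ), -((0:ℤ):ℚ)] ⟨0, 0, 1, rfl⟩
    simp only [Matrix.trace_fin_two, Matrix.mul_apply, Fin.sum_univ_two,
      Matrix.cons_val', Matrix.cons_val_zero, Matrix.cons_val_one, Matrix.head_cons,
      Matrix.empty_val', Matrix.cons_val_fin_one, Matrix.head_fin_const,
      Int.cast_zero, Int.cast_one, Matrix.of_apply] at hn1 hn2 hn3
    refine ⟨n3, -n2, n1, ?_⟩
    ext i j
    fin_cases i <;> fin_cases j <;>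
      simp only [Matrix.cons_val', Matrix.cons_val_zero, Matrix.cons_val_one,
        Matrix.head_cons, Matrix.empty_val', Matrix.cons_val_fin_one, Matrix.head_fin_const,
        Int.cast_neg, Matrix.of_apply, Fin.zero_eta, Fin.mk_one] <;>
      (try field_simp) <;> field_simp at hn1 hn2 hn3 <;>
      first
        | linarith
        | linear_combination (p:ℚ)*htr - hn2
        | linear_combination hn2 + (p:ℚ)*htr
  · rintro ⟨a, b, c, rfl⟩
    constructor
    · rw [Matrix.trace_fin_two]
      simp
      ring
    · rintro l ⟨a', b', c', rfl⟩
      refine ⟨a * c' + c * a' - b * b', ?_⟩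
      simp only [Matrix.trace_fin_two, Matrix.mul_apply, Fin.sum_univ_two,
        Matrix.cons_val', Matrix.cons_val_zero, Matrix.cons_val_one, Matrix.head_cons,
        Matrix.empty_val', Matrix.cons_val_fin_one, Matrix.head_fin_const, Matrix.of_apply]
      push_cast
      field_simp
      ring
end

section
/- For every x ∈ L' there exists a unique η ∈ {0, 1, ..., 2p-1} such that x - [[η/(2p), 0],[0, -η/(2p)]] ∈ L. Consequently the quotient group L'/L is cyclic of order 2p, generated by the class of [[1/(2p), 0],[0, -1/(2p)]]. -/
open Matrix

/-- With `L` the lattice of trace-zero matrices `[[b, -a/p], [c, -b]]`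
(`a, b, c ∈ ℤ`) and `L'` its dual lattice with respect to `(X, Y) = -p·tr(X·Y)`:
for every `x ∈ L'` there exists a unique `η ∈ {0, 1, …, 2p - 1}` such that
`x - [[η/(2p), 0], [0, -η/(2p)]] ∈ L`.  Consequently the quotient group `L'/L` is cyclic of
order `2p`, generated by the class of `gen = [[1/(2p), 0], [0, -1/(2p)]]`: every element of `L'`
is congruent modulo `L` to an integer multiple of `gen`, and `k • gen ∈ L` iff `2p ∣ k`. -/
theorem dual_mod_lattice_cyclic (p : ℕ) (hp : p.Prime)
    (L : Set (Matrix (Fin 2) (Fin 2) ℚ))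
    (hL : L = {y | ∃ a b c : ℤ, y = !![(b : ℚ), -(a : ℚ) / p; (c : ℚ), -(b : ℚ)]})
    (L' : Set (Matrix (Fin 2) (Fin 2) ℚ))
    (hL' : L' = {x | x.trace = 0 ∧ ∀ l ∈ L, ∃ n : ℤ, -(p : ℚ) * (x * l).trace = (n : ℚ)}) :
    (∀ x ∈ L', ∃! η : ℕ, η < 2 * p ∧
        x - !![(η : ℚ) / (2 * p), 0; 0, -(η : ℚ) / (2 * p)] ∈ L) ∧
    (∀ x ∈ L', ∃ k : ℤ,
        x - k • !![(1 : ℚ) / (2 * p), 0; 0, -(1 : ℚ) / (2 * p)] ∈ L) ∧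
    (∀ k : ℤ, k • !![(1 : ℚ) / (2 * p), 0; 0, -(1 : ℚ) / (2 * p)] ∈ L ↔ (2 * (p : ℤ)) ∣ k) := by
  have hppos : 0 < p := hp.pos
  have hp0 : (0:ℚ) < (p:ℚ) := by exact_mod_cast hppos
  have hpne : (p:ℚ) ≠ 0 := ne_of_gt hp0
  have h2p : (2*(p:ℚ)) ≠ 0 := by positivity
  have hZpos : (0:ℤ) < 2 * (p:ℤ) := by omega
  -- characterization of membership in L
  have memL : ∀ y : Matrix (Fin 2) (Fin 2) ℚ, y ∈ L ↔
      (∃ b : ℤ, y 0 0 = (b:ℚ)) ∧ (∃ a : ℤ, y 0 1 = (a:ℚ)/p) ∧ (∃ c : ℤ, y 1 0 = (c:ℚ))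
        ∧ y 1 1 = - y 0 0 := by
    intro y
    rw [hL]
    constructor
    · rintro ⟨a, b, c, rfl⟩
      refine ⟨⟨b, ?_⟩, ⟨-a, ?_⟩, ⟨c, ?_⟩, ?_⟩ <;> simp [neg_div]
    · rintro ⟨⟨b, hb⟩, ⟨a, ha⟩, ⟨c, hc⟩, h⟩
      refine ⟨-a, b, c, ?_⟩
      rw [Matrix.eta_fin_two y, hb, ha, hc, h, hb]
      norm_num [neg_div]
  -- characterization of L'
  have hdual : ∀ x ∈ L', (∃ m : ℤ, x 0 0 = (m:ℚ)/(2*p)) ∧ (∃ a : ℤ, x 0 1 = (a:ℚ)/p)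
      ∧ (∃ c : ℤ, x 1 0 = (c:ℚ)) ∧ x 1 1 = - x 0 0 := by
    intro x hx
    rw [hL'] at hx
    obtain ⟨htr, hd⟩ := hx
    rw [Matrix.trace_fin_two] at htr
    have h11 : x 1 1 = - x 0 0 := by linarith
    have hl1 : !![(1:ℚ), 0; 0, -1] ∈ L := by
      rw [hL]; exact ⟨0, 1, 0, by norm_num⟩
    have hl2 : !![(0:ℚ), 0; 1, 0] ∈ L := by
      rw [hL]; exact ⟨0, 0, 1, by norm_num⟩
    have hl3 : !![(0:ℚ), -1/p; 0, 0] ∈ L := by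
      rw [hL]; exact ⟨1, 0, 0, by norm_num⟩
    obtain ⟨n1, hn1⟩ := hd _ hl1
    obtain ⟨n2, hn2⟩ := hd _ hl2
    obtain ⟨n3, hn3⟩ := hd _ hl3
    simp [Matrix.trace_fin_two, Matrix.mul_apply, Fin.sum_univ_two, h11] at hn1 hn2 hn3
    refine ⟨⟨-n1, ?_⟩, ⟨-n2, ?_⟩, ⟨n3, ?_⟩, h11⟩
    · push_cast
      field_simp
      linarith
    · push_cast
      field_simp
      linarith
    · field_simp at hn3
      linarith
  refine ⟨?_, ?_, ?_⟩
  · -- unique η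
    intro x hx
    obtain ⟨⟨m, hm⟩, ⟨a, ha⟩, ⟨c, hc⟩, h11⟩ := hdual x hx
    have h2 : 0 ≤ m % (2*(p:ℤ)) := Int.emod_nonneg m (ne_of_gt hZpos)
    have h1 : m % (2*(p:ℤ)) < 2*p := Int.emod_lt_of_pos m hZpos
    have hcast : (((m % (2*(p:ℤ))).toNat : ℚ)) = ((m % (2*(p:ℤ)) : ℤ) : ℚ) := by
      exact_mod_cast congrArg (Int.cast : ℤ → ℚ) (Int.toNat_of_nonneg h2)
    have hdiv : (m:ℚ) - ((m % (2*(p:ℤ)) : ℤ) : ℚ) = (2*(p:ℚ)) * ((m / (2*(p:ℤ)) : ℤ) : ℚ) := by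
      have := Int.mul_ediv_add_emod m (2*(p:ℤ))
      have : (m:ℤ) - m % (2*(p:ℤ)) = (2*(p:ℤ)) * (m / (2*(p:ℤ))) := by linarith
      exact_mod_cast congrArg (Int.cast : ℤ → ℚ) this
    refine ⟨(m % (2*p)).toNat, ⟨by omega, ?_⟩, ?_⟩
    · rw [memL]
      refine ⟨⟨m / (2*(p:ℤ)), ?_⟩, ⟨a, ?_⟩, ⟨c, ?_⟩, ?_⟩ <;>
        simp [Matrix.sub_apply, hm, ha, hc, h11, hcast] <;> field_simp <;> linarith
    · rintro η' ⟨hlt, hmem⟩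
      rw [memL] at hmem
      obtain ⟨⟨b, hb⟩, -, -, -⟩ := hmem
      simp [Matrix.sub_apply, hm] at hb
      have hQ : (m:ℚ) - (η':ℚ) = (2*(p:ℚ)) * b := by field_simp at hb ⊢; linarith
      have hZ : (m:ℤ) - (η':ℤ) = (2*(p:ℤ)) * b := by exact_mod_cast hQ
      have hdvd : (2*(p:ℤ)) ∣ (m - (η':ℤ)) := ⟨b, hZ⟩
      have hmod : (η':ℤ) % (2*(p:ℤ)) = m % (2*(p:ℤ)) := Int.modEq_iff_dvd.mpr hdvd
      have : (η':ℤ) % (2*(p:ℤ)) = (η':ℤ) := Int.emod_eq_of_lt (by positivity) (by exact_mod_cast hlt)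
      omega
  · -- every x congruent to multiple of gen
    intro x hx
    obtain ⟨⟨m, hm⟩, ⟨a, ha⟩, ⟨c, hc⟩, h11⟩ := hdual x hx
    refine ⟨m, ?_⟩
    rw [memL]
    refine ⟨⟨0, ?_⟩, ⟨a, ?_⟩, ⟨c, ?_⟩, ?_⟩ <;>
      simp [Matrix.sub_apply, Matrix.smul_apply, hm, ha, hc, h11] <;> field_simp <;> ring
  · -- k • gen ∈ L ↔ 2p ∣ k
    intro k
    rw [memL]
    constructor
    · rintro ⟨⟨b, hb⟩, -, -, -⟩
      simp [Matrix.smul_apply] at hb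
      have hQ : (k:ℚ) = (2*(p:ℚ)) * b := by field_simp at hb; linarith
      exact ⟨b, by exact_mod_cast hQ⟩
    · rintro ⟨d, rfl⟩
      refine ⟨⟨d, ?_⟩, ⟨0, ?_⟩, ⟨0, ?_⟩, ?_⟩
      · simp [Matrix.smul_apply]
        field_simp
      · simp [Matrix.smul_apply]
      · simp [Matrix.smul_apply]
      · simp [Matrix.smul_apply]
        field_simp
end

section
/- The integer g divides D, and the subgroup L₊ + L₋ := ℤ·(2p/g)·x + ℤ·e₁ + ℤ·e₂ has finite index exactly D/g in the lattice L. -/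
open Matrix

/-- The lattice `L` of matrices `[[b, -a/p], [c, -b]]` with `a, b, c ∈ ℤ`, as an additive
subgroup of the `2 × 2` rational matrices. -/
def latticeL (p : ℕ) : AddSubgroup (Matrix (Fin 2) (Fin 2) ℚ) where
  carrier := {y | ∃ a b c : ℤ, y = !![(b : ℚ), -(a : ℚ) / p; (c : ℚ), -(b : ℚ)]}
  zero_mem' := ⟨0, 0, 0, by ext i j; fin_cases i <;> fin_cases j <;> norm_num⟩
  add_mem' := by
    rintro y z ⟨a₁, b₁, c₁, rfl⟩ ⟨a₂, b₂, c₂, rfl⟩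
    refine ⟨a₁ + a₂, b₁ + b₂, c₁ + c₂, ?_⟩
    ext i j
    fin_cases i <;> fin_cases j <;>
      simp [Matrix.add_apply] <;> push_cast <;> ring
  neg_mem' := by
    rintro y ⟨a, b, c, rfl⟩
    refine ⟨-a, -b, -c, ?_⟩
    ext i j
    fin_cases i <;> fin_cases j <;>
      simp [Matrix.neg_apply] <;> push_cast <;> ring

/-- The additive subgroup `ℤv₁ + ℤv₂ + ℤv₃` generated by three `2 × 2` rational matrices. -/
def zSpan₃ (v₁ v₂ v₃ : Matrix (Fin 2) (Fin 2) ℚ) :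
    AddSubgroup (Matrix (Fin 2) (Fin 2) ℚ) where
  carrier := {y | ∃ k a b : ℤ, y = (k : ℚ) • v₁ + (a : ℚ) • v₂ + (b : ℚ) • v₃}
  zero_mem' := ⟨0, 0, 0, by ext i j; fin_cases i <;> fin_cases j <;> norm_num⟩
  add_mem' := by
    rintro y z ⟨k₁, a₁, b₁, rfl⟩ ⟨k₂, a₂, b₂, rfl⟩
    exact ⟨k₁ + k₂, a₁ + a₂, b₁ + b₂, by push_cast; module⟩
  neg_mem' := by
    rintro y ⟨k, a, b, rfl⟩
    exact ⟨-k, -a, -b, by push_cast; module⟩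

/-- Auxiliary linear functional `M ↦ M₁₀ + p·m·M₀₁ + μ·M₀₀`; on the lattice `L` this
computes `c - m·a + μ·b`. -/
def phiv (p : ℕ) (μ m : ℤ) (M : Matrix (Fin 2) (Fin 2) ℚ) : ℚ :=
  M 1 0 + (p : ℚ) * m * M 0 1 + μ * M 0 0

lemma phiv_add (p : ℕ) (μ m : ℤ) (A B : Matrix (Fin 2) (Fin 2) ℚ) :
    phiv p μ m (A + B) = phiv p μ m A + phiv p μ m B := by
  simp [phiv, Matrix.add_apply]; ring

lemma phiv_mem (p : ℕ) (hp : (p : ℚ) ≠ 0) (μ m a b c : ℤ) :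
    phiv p μ m !![(b : ℚ), -(a : ℚ) / p; (c : ℚ), -(b : ℚ)] = ((c - m * a + μ * b : ℤ) : ℚ) := by
  simp [phiv]
  field_simp
  ring

/-- The reduction map `L →+ ZMod n`, `[[b,-a/p],[c,-b]] ↦ c - m·a + μ·b mod n`. -/
def fhom (p : ℕ) (hp : (p : ℚ) ≠ 0) (μ m : ℤ) (n : ℕ) : latticeL p →+ ZMod n where
  toFun y := ((phiv p μ m (y : Matrix (Fin 2) (Fin 2) ℚ)).num : ZMod n)
  map_zero' := by simp [phiv]
  map_add' y z := by
    obtain ⟨a₁, b₁, c₁, h₁⟩ := y.2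
    obtain ⟨a₂, b₂, c₂, h₂⟩ := z.2
    have hadd : ((y + z : latticeL p) : Matrix (Fin 2) (Fin 2) ℚ)
        = (y : Matrix (Fin 2) (Fin 2) ℚ) + (z : Matrix (Fin 2) (Fin 2) ℚ) := rfl
    show ((phiv p μ m ((y + z : latticeL p) : Matrix (Fin 2) (Fin 2) ℚ)).num : ZMod n)
        = ((phiv p μ m (y : Matrix (Fin 2) (Fin 2) ℚ)).num : ZMod n)
          + ((phiv p μ m (z : Matrix (Fin 2) (Fin 2) ℚ)).num : ZMod n)
    rw [hadd, phiv_add, h₁, h₂, phiv_mem p hp, phiv_mem p hp, ← Int.cast_add,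
      Rat.num_intCast, Rat.num_intCast, Rat.num_intCast, Int.cast_add]

/-- With `L` the lattice of trace-zero matrices `[[b, -a/p], [c, -b]]`
(`a, b, c ∈ ℤ`), `D = -(μ² + 4pm) > 0`, `x = [[μ/(2p), 1/p], [m, -μ/(2p)]]`,
`e₁ = [[1, 0], [-μ, -1]]`, `e₂ = [[0, 1/p], [-m, 0]]` and `g = gcd(μ, 2p)`:
the integer `g` divides `D`, and the subgroup `L₊ + L₋ = ℤ·(2p/g)·x + ℤe₁ + ℤe₂` has finite
index exactly `D/g` in the lattice `L`. -/
theorem sublattice_index (p : ℕ) (hp : p.Prime) (μ m D : ℤ)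
    (hD : D = -(μ ^ 2 + 4 * p * m)) (hDpos : 0 < D)
    (g : ℕ) (hg : g = Int.gcd μ (2 * p))
    (x e₁ e₂ : Matrix (Fin 2) (Fin 2) ℚ)
    (hx : x = !![(μ : ℚ) / (2 * p), 1 / p; (m : ℚ), -(μ : ℚ) / (2 * p)])
    (he₁ : e₁ = !![(1 : ℚ), 0; -(μ : ℚ), -1])
    (he₂ : e₂ = !![(0 : ℚ), 1 / p; -(m : ℚ), 0]) :
    (g : ℤ) ∣ D ∧
    zSpan₃ ((2 * (p : ℚ) / g) • x) e₁ e₂ ≤ latticeL p ∧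
    (zSpan₃ ((2 * (p : ℚ) / g) • x) e₁ e₂).relIndex (latticeL p) ≠ 0 ∧
    ((zSpan₃ ((2 * (p : ℚ) / g) • x) e₁ e₂).relIndex (latticeL p) : ℤ) = D / g := by
  have hp0 : (p : ℚ) ≠ 0 := Nat.cast_ne_zero.mpr hp.pos.ne'
  have h2p : (2 * (p : ℤ)) ≠ 0 :=
    mul_ne_zero two_ne_zero (by exact_mod_cast hp.pos.ne')
  have hgpos : 0 < g := by
    rw [hg]
    rcases Nat.eq_zero_or_pos (Int.gcd μ (2 * p)) with h | h
    · exact absurd ((Int.gcd_eq_zero_iff).mp h).2 h2p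
    · exact h
  have hgz : (g : ℤ) ≠ 0 := by exact_mod_cast hgpos.ne'
  have hgq : (g : ℚ) ≠ 0 := by exact_mod_cast hgpos.ne'
  obtain ⟨u, hu⟩ : (g : ℤ) ∣ μ := by rw [hg]; exact Int.gcd_dvd_left _ _
  obtain ⟨t, ht⟩ : (g : ℤ) ∣ 2 * p := by rw [hg]; exact Int.gcd_dvd_right _ _
  have hgD : (g : ℤ) ∣ D := ⟨-((g : ℤ) * u ^ 2 + 2 * t * m), by
    rw [hD]; linear_combination (-(μ + (g : ℤ) * u)) * hu + (-2 * m) * ht⟩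
  obtain ⟨d, hd⟩ := hgD
  have hgzi : (0 : ℤ) < g := by exact_mod_cast hgpos
  have hdpos : 0 < d := by nlinarith [hd, hDpos]
  have hkey : (2 * t * m + (g : ℤ) * u ^ 2 : ℤ) = -d := by
    have hdd := hd
    rw [hD] at hdd
    have h2 : (g : ℤ) * (2 * t * m + g * u ^ 2) = (g : ℤ) * (-d) := by
      linear_combination (-1) * hdd + (-(μ + (g : ℤ) * u)) * hu + (-2 * m) * ht
    exact mul_left_cancel₀ hgz h2
  -- rational versions
  have huQ : (μ : ℚ) = (g : ℚ) * u := by exact_mod_cast hu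
  have htQ : 2 * (p : ℚ) = (g : ℚ) * t := by exact_mod_cast ht
  have hkeyQ : 2 * (t : ℚ) * m + (g : ℚ) * u ^ 2 = -(d : ℚ) := by exact_mod_cast hkey
  set n : ℕ := d.toNat with hn
  have hnd : (n : ℤ) = d := Int.toNat_of_nonneg hdpos.le
  have hn0 : n ≠ 0 := by
    intro h; rw [h] at hnd; omega
  -- explicit form of the first generator
  have hv₁ : (2 * (p : ℚ) / g) • x
      = !![((u : ℤ) : ℚ), -((-t : ℤ) : ℚ) / p; ((t * m : ℤ) : ℚ), -((u : ℤ) : ℚ)] := by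
    rw [hx]
    ext i j
    fin_cases i <;> fin_cases j <;>
      · simp [Matrix.smul_apply]
        field_simp
        first
          | linear_combination (2 * (p : ℚ)) * huQ
          | linear_combination (p : ℚ) * htQ
          | linear_combination huQ
          | linear_combination (-1 : ℚ) * huQ
          | linear_combination htQ
          | exact Or.inl (by linear_combination htQ)
  have hsub : zSpan₃ ((2 * (p : ℚ) / g) • x) e₁ e₂ ≤ latticeL p := by
    rintro y ⟨k, α, β, rfl⟩
    refine ⟨-(k * t) - β, k * u + α, k * (t * m) - α * μ - β * m, ?_⟩
    rw [hv₁, he₁, he₂]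
    ext i j
    fin_cases i <;> fin_cases j <;>
      (try simp [Matrix.smul_apply, Matrix.add_apply]) <;>
      (try push_cast) <;> (try field_simp) <;> (try push_cast) <;> ring
  -- the key characterization
  have hiff : ∀ a b c : ℤ,
      (!![(b : ℚ), -(a : ℚ) / p; (c : ℚ), -(b : ℚ)] ∈ zSpan₃ ((2 * (p : ℚ) / g) • x) e₁ e₂
        ↔ d ∣ (c - m * a + μ * b)) := by
    intro a b c
    constructor
    · rintro ⟨k, α, β, heq⟩
      rw [hv₁, he₁, he₂] at heq
      rw [← Matrix.ext_iff] at heq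
      have h00 := heq 0 0
      have h01 := heq 0 1
      have h10 := heq 1 0
      simp [Matrix.smul_apply, Matrix.add_apply] at h00 h01 h10
      refine ⟨-k, ?_⟩
      have hcast : ((c - m * a + μ * b : ℤ) : ℚ) = ((d * (-k) : ℤ) : ℚ) := by
        push_cast
        push_cast at h00 h01 h10
        have haq : (a : ℚ) = -((k : ℚ) * t) - β := by
          field_simp at h01
          have h := mul_right_cancel₀ hp0
            (show (-(a : ℚ)) * p = ((k : ℚ) * t + β) * p by linear_combination (p : ℚ) * h01)
          linarith
        linear_combination h10 + (-(m : ℚ)) * haq + (μ : ℚ) * h00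
          + ((k : ℚ) * u) * huQ + (k : ℚ) * hkeyQ
      exact_mod_cast hcast
    · rintro ⟨k, hk⟩
      have hkQ : (c : ℚ) - m * a + μ * b = (d : ℚ) * k := by exact_mod_cast hk
      refine ⟨-k, b - u * (-k), -(t * (-k)) - a, ?_⟩
      rw [hv₁, he₁, he₂]
      ext i j
      fin_cases i <;> fin_cases j
      · simp [Matrix.smul_apply, Matrix.add_apply]; push_cast; ring
      · simp [Matrix.smul_apply, Matrix.add_apply]; push_cast; field_simp; ring
      · simp [Matrix.smul_apply, Matrix.add_apply]
        push_cast
        linear_combination hkQ + ((k : ℚ) * u) * huQ + (k : ℚ) * hkeyQ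
      · simp [Matrix.smul_apply, Matrix.add_apply]; push_cast; ring
  -- identify the relative subgroup with the kernel of fhom
  have hker : (zSpan₃ ((2 * (p : ℚ) / g) • x) e₁ e₂).addSubgroupOf (latticeL p)
      = (fhom p hp0 μ m n).ker := by
    ext ⟨y, hy⟩
    obtain ⟨a, b, c, rfl⟩ := hy
    rw [AddSubgroup.mem_addSubgroupOf, AddMonoidHom.mem_ker]
    show _ ↔ ((phiv p μ m _).num : ZMod n) = 0
    rw [phiv_mem p hp0, Rat.num_intCast, ZMod.intCast_zmod_eq_zero_iff_dvd, hnd]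
    exact hiff a b c
  have hsurj : Function.Surjective (fhom p hp0 μ m n) := by
    intro z
    obtain ⟨j, rfl⟩ := ZMod.intCast_surjective z
    refine ⟨⟨!![((0 : ℤ) : ℚ), -((0 : ℤ) : ℚ) / p; ((j : ℤ) : ℚ), -((0 : ℤ) : ℚ)],
      ⟨0, 0, j, rfl⟩⟩, ?_⟩
    show ((phiv p μ m _).num : ZMod n) = (j : ZMod n)
    rw [phiv_mem p hp0, Rat.num_intCast]
    norm_num
  have hindex : (zSpan₃ ((2 * (p : ℚ) / g) • x) e₁ e₂).relIndex (latticeL p) = n := by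
    show ((zSpan₃ ((2 * (p : ℚ) / g) • x) e₁ e₂).addSubgroupOf (latticeL p)).index = n
    rw [hker, AddSubgroup.index_eq_card,
      Nat.card_congr (QuotientAddGroup.quotientKerEquivOfSurjective _ hsurj).toEquiv,
      Nat.card_zmod]
  refine ⟨⟨d, hd⟩, hsub, ?_, ?_⟩
  · rw [hindex]; exact hn0
  · rw [hindex, hnd, hd, Int.mul_ediv_cancel_left _ hgz]
end

section
/- Suppose -D is a fundamental discriminant, i.e. either D ≡ 3 (mod 4) and D is squarefree, or 4 | D, D/4 is squarefree, and D/4 ≡ 1 or 2 (mod 4). Let K = ℚ(√-D), let φ : K → M₂(ℚ) be the ℚ-algebra homomorphism with φ(√-D) = [[μ, 2],[2pm, -μ]], and let R₀ = [[ℤ, ℤ],[pℤ, ℤ]] be the order of M₂(ℚ) consisting of integral matrices whose lower-left entry is divisible by p. Then φ⁻¹(R₀) equals the ring of integers O_K of K; equivalently, for v, w ∈ ℚ one has φ(v + w·(-D + √-D)/2) ∈ R₀ if and only if v, w ∈ ℤ. -/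
open Polynomial

lemma int_of_sqfree_mul_sq {d : ℤ} (hd : Squarefree d) {q : ℚ} {k : ℤ}
    (hk : (d : ℚ) * q ^ 2 = (k : ℚ)) : ∃ n : ℤ, q = (n : ℚ) := by
  have hd0 : d ≠ 0 := hd.ne_zero
  have hd0' : (d : ℚ) ≠ 0 := Int.cast_ne_zero.mpr hd0
  have hint : IsIntegral ℤ ((d : ℚ) * q) := by
    refine ⟨X ^ 2 - C (d * k), monic_X_pow_sub_C _ (by norm_num), ?_⟩
    rw [eval₂_sub, eval₂_pow, eval₂_X, eval₂_C]
    show ((d : ℚ) * q) ^ 2 - algebraMap ℤ ℚ (d * k) = 0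
    rw [eq_intCast]
    push_cast
    linear_combination (d : ℚ) * hk
  obtain ⟨b, hb⟩ := IsIntegrallyClosed.isIntegral_iff.mp hint
  have hb' : (b : ℚ) = (d : ℚ) * q := hb
  have hbk : b ^ 2 = d * k := by
    have : ((b : ℚ)) ^ 2 = ((d * k : ℤ) : ℚ) := by
      rw [hb']; push_cast; linear_combination (d:ℚ) * hk
    exact_mod_cast this
  have hdvd : d ∣ b := (hd.dvd_pow_iff_dvd (two_ne_zero)).mp ⟨k, hbk⟩
  obtain ⟨e, rfl⟩ := hdvd
  refine ⟨e, ?_⟩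
  have : (d : ℚ) * q = (d : ℚ) * e := by rw [← hb']; push_cast; ring
  exact mul_left_cancel₀ hd0' this

lemma arith_core (D : ℤ)
    (hfund : (D % 4 = 3 ∧ Squarefree D) ∨
      (4 ∣ D ∧ Squarefree (D / 4) ∧ (D / 4 % 4 = 1 ∨ D / 4 % 4 = 2)))
    (v w : ℚ) (a N : ℤ) (ha : 2 * v = (a : ℚ)) (hN : v ^ 2 + (D : ℚ) * w ^ 2 = (N : ℚ)) :
    (∃ n : ℤ, v + (D : ℚ) * w = (n : ℚ)) ∧ (∃ n : ℤ, 2 * w = (n : ℚ)) := by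
  rcases hfund with ⟨hD4, hsq⟩ | ⟨hdvd, hsq, hd4⟩
  · -- D ≡ 3 mod 4, D squarefree
    obtain ⟨c, hc⟩ : ∃ c : ℤ, 2 * w = (c : ℚ) :=
      int_of_sqfree_mul_sq hsq (k := 4 * N - a ^ 2)
        (by push_cast; linear_combination 4 * hN - (2 * v + (a:ℚ)) * ha)
    have hkey : a ^ 2 + D * c ^ 2 = 4 * N := by
      have : (a : ℚ) ^ 2 + (D:ℚ) * (c:ℚ) ^ 2 = ((4 * N : ℤ) : ℚ) := by
        push_cast
        linear_combination 4 * hN - (2*v + (a:ℚ)) * ha - (D:ℚ) * (2*w + (c:ℚ)) * hc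
      exact_mod_cast this
    -- mod 2 argument
    have hDodd : (D : ZMod 2) = 1 := by
      obtain ⟨k, hk⟩ : ∃ k, D = 2 * k + 1 := ⟨D / 2, by omega⟩
      rw [hk]; push_cast
      rw [show (2 : ZMod 2) = 0 by decide]; ring
    have hmod : (a : ZMod 2) ^ 2 + (D : ZMod 2) * (c : ZMod 2) ^ 2 = 0 := by
      have h := congrArg (Int.cast : ℤ → ZMod 2) hkey
      push_cast at h
      rw [h, show (4 : ZMod 2) = 0 by decide, zero_mul]
    rw [hDodd, one_mul] at hmod
    have hAC : (a : ZMod 2) + (c : ZMod 2) = 0 := by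
      have key2 : ∀ A C : ZMod 2, A ^ 2 + C ^ 2 = 0 → A + C = 0 := by decide
      exact key2 _ _ hmod
    have h2dvd : (2 : ℤ) ∣ a + D * c := by
      have : ((a + D * c : ℤ) : ZMod 2) = 0 := by
        push_cast
        rw [hDodd, one_mul, hAC]
      exact (ZMod.intCast_zmod_eq_zero_iff_dvd _ 2).mp this
    obtain ⟨t, ht⟩ := h2dvd
    constructor
    · refine ⟨t, ?_⟩
      have htq : (a : ℚ) + (D:ℚ) * (c:ℚ) = 2 * (t : ℚ) := by exact_mod_cast ht
      linear_combination ha / 2 + (D : ℚ) / 2 * hc + htq / 2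
    · exact ⟨c, hc⟩
  · -- 4 ∣ D
    obtain ⟨s, hs⟩ := hdvd
    have hDd : D = 4 * (D / 4) := by omega
    set d := D / 4 with hd
    obtain ⟨c, hc⟩ : ∃ c : ℤ, 4 * w = (c : ℚ) :=
      int_of_sqfree_mul_sq hsq (k := 4 * N - a ^ 2)
        (by push_cast
            rw [hDd] at hN
            push_cast at hN
            linear_combination 4 * hN - (2 * v + (a:ℚ)) * ha)
    have hkey : a ^ 2 + d * c ^ 2 = 4 * N := by
      have : (a : ℚ) ^ 2 + (d:ℚ) * (c:ℚ) ^ 2 = ((4 * N : ℤ) : ℚ) := by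
        rw [hDd] at hN
        push_cast at hN ⊢
        linear_combination 4 * hN - (2*v + (a:ℚ)) * ha - (d:ℚ) * (4*w + (c:ℚ)) * hc
      exact_mod_cast this
    have hdm : (d : ZMod 4) = 1 ∨ (d : ZMod 4) = 2 := by
      rcases hd4 with h | h
      · left
        obtain ⟨k, hk⟩ : ∃ k, d = 4 * k + 1 := ⟨d / 4, by omega⟩
        rw [hk]; push_cast
        rw [show (4 : ZMod 4) = 0 by decide]; ring
      · right
        obtain ⟨k, hk⟩ : ∃ k, d = 4 * k + 2 := ⟨d / 4, by omega⟩
        rw [hk]; push_cast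
        rw [show (4 : ZMod 4) = 0 by decide]; ring
    have hmod : (a : ZMod 4) ^ 2 + (d : ZMod 4) * (c : ZMod 4) ^ 2 = 0 := by
      have h := congrArg (Int.cast : ℤ → ZMod 4) hkey
      push_cast at h
      rw [h, show (4 : ZMod 4) = 0 by decide, zero_mul]
    have haeven : (2:ℤ) ∣ a ∧ (2:ℤ) ∣ c := by
      have key : ∀ A C dd : ZMod 4, (dd = 1 ∨ dd = 2) → A ^ 2 + dd * C ^ 2 = 0 →
          ((A = 0 ∨ A = 2) ∧ (C = 0 ∨ C = 2)) := by decide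
      have := key _ _ _ hdm hmod
      constructor
      · rcases this.1 with h | h
        · have : (4:ℤ) ∣ a := (ZMod.intCast_zmod_eq_zero_iff_dvd _ 4).mp h
          omega
        · have : (4:ℤ) ∣ a - 2 := by
            apply (ZMod.intCast_zmod_eq_zero_iff_dvd _ 4).mp
            push_cast
            rw [h]; decide
          omega
      · rcases this.2 with h | h
        · have : (4:ℤ) ∣ c := (ZMod.intCast_zmod_eq_zero_iff_dvd _ 4).mp h
          omega
        · have : (4:ℤ) ∣ c - 2 := by
            apply (ZMod.intCast_zmod_eq_zero_iff_dvd _ 4).mp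
            push_cast
            rw [h]; decide
          omega
    obtain ⟨⟨a1, ha1⟩, ⟨c1, hc1⟩⟩ := haeven
    constructor
    · refine ⟨a1 + 2 * d * c1, ?_⟩
      have ha' : 2 * v = 2 * (a1 : ℚ) := by rw [ha]; exact_mod_cast congrArg (Int.cast : ℤ → ℚ) ha1
      have hc' : 4 * w = 2 * (c1 : ℚ) := by rw [hc]; exact_mod_cast congrArg (Int.cast : ℤ → ℚ) hc1
      have hDq : (D : ℚ) = 4 * (d : ℚ) := by exact_mod_cast hDd
      rw [hDq]
      push_cast
      linear_combination ha' / 2 + (d : ℚ) * hc'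
    · refine ⟨c1, ?_⟩
      have hc' : 4 * w = 2 * (c1 : ℚ) := by rw [hc]; exact_mod_cast congrArg (Int.cast : ℤ → ℚ) hc1
      linear_combination hc' / 2

lemma trace_norm_int {K : Type*} [Field K] [Algebra ℚ K] {D : ℤ} {ζ : K}
    (hζ2 : ζ ^ 2 = -(D : K)) (hζ : ζ ∉ Set.range (algebraMap ℚ K))
    {v w : ℚ} (hint : IsIntegral ℤ (algebraMap ℚ K v + algebraMap ℚ K w * ζ)) :
    (∃ a : ℤ, 2 * v = (a : ℚ)) ∧ (∃ N : ℤ, v ^ 2 + (D : ℚ) * w ^ 2 = (N : ℚ)) := by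
  set x : K := algebraMap ℚ K v + algebraMap ℚ K w * ζ with hx
  by_cases hw : w = 0
  · subst hw
    simp only [map_zero, zero_mul, add_zero] at hx
    rw [hx] at hint
    have hvint : IsIntegral ℤ v :=
      (isIntegral_algebraMap_iff (algebraMap ℚ K).injective).mp hint
    obtain ⟨n, hn⟩ := IsIntegrallyClosed.isIntegral_iff.mp hvint
    have hn' : (n : ℚ) = v := hn
    exact ⟨⟨2 * n, by push_cast [← hn']; ring⟩, ⟨n ^ 2, by push_cast [← hn']; ring⟩⟩
  · set q : ℚ[X] := X ^ 2 - C (2 * v) * X + C (v ^ 2 + (D : ℚ) * w ^ 2) with hq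
    have hqmonic : q.Monic := by
      rw [hq]
      monicity!
    have hqdeg : q.natDegree = 2 := by
      rw [hq]
      compute_degree!
    have hqx : Polynomial.aeval x q = 0 := by
      rw [hq]
      simp only [map_add, map_sub, map_mul, map_pow, aeval_X, aeval_C, map_intCast]
      rw [hx]
      simp only [map_add, map_mul, map_pow, map_ofNat, map_intCast]
      linear_combination (algebraMap ℚ K w) ^ 2 * hζ2
    have hxint : IsIntegral ℚ x := hint.tower_top
    have hxnotrange : x ∉ (algebraMap ℚ K).range := by
      rintro ⟨c, hc⟩
      apply hζ
      refine ⟨(c - v) / w, ?_⟩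
      rw [map_div₀, map_sub]
      have h2 : algebraMap ℚ K c = algebraMap ℚ K v + algebraMap ℚ K w * ζ := hc.trans hx
      have hwK : algebraMap ℚ K w ≠ 0 := fun h =>
        hw ((algebraMap ℚ K).injective (by rw [h, map_zero]))
      rw [div_eq_iff hwK]
      linear_combination h2
    have hdvd : minpoly ℚ x ∣ q := minpoly.dvd ℚ x hqx
    have hdeg2 : 2 ≤ (minpoly ℚ x).natDegree := (minpoly.two_le_natDegree_iff hxint).mpr hxnotrange
    have hdegle : (minpoly ℚ x).natDegree ≤ 2 := by
      rw [← hqdeg]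
      exact natDegree_le_of_dvd hdvd hqmonic.ne_zero
    have heq : q = minpoly ℚ x := by
      apply eq_of_monic_of_dvd_of_natDegree_le (minpoly.monic hxint) hqmonic hdvd
      rw [hqdeg]
      exact hdeg2
    have hmap : minpoly ℚ x = (minpoly ℤ x).map (algebraMap ℤ ℚ) :=
      minpoly.isIntegrallyClosed_eq_field_fractions ℚ K hint
    have hc1 : q.coeff 1 = -(2 * v) := by
      rw [hq]
      simp only [coeff_add, coeff_sub, coeff_C_mul, coeff_X_pow, coeff_X_one, coeff_C]
      norm_num
    have hc0 : q.coeff 0 = v ^ 2 + (D : ℚ) * w ^ 2 := by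
      rw [hq]
      simp only [coeff_add, coeff_sub, coeff_C_mul, coeff_X_pow, coeff_X_zero, coeff_C]
      norm_num
    constructor
    · refine ⟨-((minpoly ℤ x).coeff 1), ?_⟩
      have := congrArg (fun r => Polynomial.coeff r 1) (heq.trans hmap)
      simp only [coeff_map, eq_intCast] at this
      rw [hc1] at this
      push_cast
      linarith [this]
    · refine ⟨(minpoly ℤ x).coeff 0, ?_⟩
      have := congrArg (fun r => Polynomial.coeff r 0) (heq.trans hmap)
      simp only [coeff_map, eq_intCast] at this
      rw [hc0] at this
      exact this

open Matrix in
lemma phi_mem {K : Type*} [Field K] [Algebra ℚ K]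
    (p : ℕ) (μ m D : ℤ) (hD : D = -(μ ^ 2 + 4 * p * m))
    (φ : K →ₐ[ℚ] Matrix (Fin 2) (Fin 2) ℚ) (ζ : K)
    (hφ : φ ζ = !![(μ : ℚ), 2; 2 * p * m, -(μ : ℚ)])
    (R₀ : Set (Matrix (Fin 2) (Fin 2) ℚ))
    (hR₀ : R₀ = {A | (∃ n : ℤ, A 0 0 = (n : ℚ)) ∧ (∃ n : ℤ, A 0 1 = (n : ℚ)) ∧
        (∃ n : ℤ, A 1 0 = (p : ℚ) * n) ∧ (∃ n : ℤ, A 1 1 = (n : ℚ))})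
    (v w : ℚ) :
    φ (algebraMap ℚ K v + algebraMap ℚ K w * ((algebraMap ℚ K (-(D : ℚ)) + ζ) / 2)) ∈ R₀ ↔
      ((∃ n : ℤ, v = (n : ℚ)) ∧ (∃ n : ℤ, w = (n : ℚ))) := by
  have hD' : (D : ℚ) = -((μ : ℚ) ^ 2 + 4 * p * m) := by exact_mod_cast hD
  obtain ⟨k, hk⟩ : ∃ k : ℤ, μ + μ ^ 2 = 2 * k := by
    obtain ⟨r, hr⟩ := Int.even_mul_succ_self μ
    exact ⟨r, by linear_combination hr⟩
  obtain ⟨k', hk'⟩ : ∃ k' : ℤ, μ ^ 2 - μ = 2 * k' := by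
    obtain ⟨r, hr⟩ := Int.even_mul_succ_self (μ - 1)
    exact ⟨r, by linear_combination hr⟩
  have hμD : (μ : ℚ) - (D : ℚ) = 2 * ((k : ℚ) + 2 * p * m) := by
    have hk2 : (μ : ℚ) + (μ : ℚ) ^ 2 = 2 * (k : ℚ) := by exact_mod_cast hk
    linear_combination hk2 - hD'
  have hμD' : -(μ : ℚ) - (D : ℚ) = 2 * ((k' : ℚ) + 2 * p * m) := by
    have hk2 : (μ : ℚ) ^ 2 - (μ : ℚ) = 2 * (k' : ℚ) := by exact_mod_cast hk'
    linear_combination hk2 - hD'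
  have h2 : ((2 : K))⁻¹ = algebraMap ℚ K 2⁻¹ := by rw [map_inv₀, map_ofNat]
  have harg : (algebraMap ℚ K (-(D : ℚ)) + ζ) / 2 =
      algebraMap ℚ K 2⁻¹ * (algebraMap ℚ K (-(D : ℚ)) + ζ) := by
    rw [div_eq_mul_inv, h2]; ring
  have hφx : φ (algebraMap ℚ K v + algebraMap ℚ K w * ((algebraMap ℚ K (-(D : ℚ)) + ζ) / 2)) =
      !![v + w * (((μ : ℚ) - D) / 2), w;
         (p : ℚ) * (w * (m : ℚ)), v + w * ((-(μ : ℚ) - D) / 2)] := by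
    rw [harg, map_add, _root_.map_mul, _root_.map_mul, map_add, AlgHom.commutes, AlgHom.commutes,
      AlgHom.commutes, AlgHom.commutes, hφ]
    generalize (D : ℚ) = Dq
    ext i j
    fin_cases i <;> fin_cases j <;>
      simp only [Matrix.algebraMap_eq_diagonal, Algebra.algebraMap_self, RingHom.id_apply,
        Matrix.add_apply, Matrix.mul_apply, Fin.sum_univ_two, Matrix.diagonal_apply,
        Matrix.cons_val', Matrix.cons_val_zero, Matrix.cons_val_one, Matrix.head_cons,
        Matrix.head_fin_const, Matrix.empty_val', Matrix.cons_val_fin_one] <;>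
      ring_nf <;> simp <;> ring
  rw [hφx, hR₀, Set.mem_setOf_eq]
  simp only [Matrix.cons_val', Matrix.cons_val_zero, Matrix.cons_val_one, Matrix.head_cons,
    Matrix.empty_val', Matrix.cons_val_fin_one, Matrix.head_fin_const, Matrix.of_apply]
  constructor
  · rintro ⟨⟨n0, h00⟩, ⟨n1, h01⟩, -, -⟩
    subst h01
    refine ⟨⟨n0 - n1 * (k + 2 * p * m), ?_⟩, ⟨n1, rfl⟩⟩
    push_cast
    linear_combination h00 - (n1 : ℚ) / 2 * hμD
  · rintro ⟨⟨n0, rfl⟩, ⟨n1, rfl⟩⟩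
    refine ⟨⟨n0 + n1 * (k + 2 * p * m), ?_⟩, ⟨n1, rfl⟩, ⟨n1 * m, ?_⟩,
      ⟨n0 + n1 * (k' + 2 * p * m), ?_⟩⟩
    · push_cast
      linear_combination (n1 : ℚ) / 2 * hμD
    · push_cast
      ring
    · push_cast
      linear_combination (n1 : ℚ) / 2 * hμD'

/-- Let `p` be prime, `μ, m ∈ ℤ` with `m ≠ 0`, `D = -(μ² + 4pm) > 0`, and
suppose `-D` is a fundamental discriminant.  Let `K = ℚ(√-D) = ℚ⟮z⟯ ⊆ ℂ` with `z = i√D`, let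
`φ : K → M₂(ℚ)` be the `ℚ`-algebra homomorphism with `φ(√-D) = [[μ, 2], [2pm, -μ]]`, and let
`R₀ = [[ℤ, ℤ], [pℤ, ℤ]]`.  Then `φ⁻¹(R₀)` equals the ring of integers `O_K` of `K`
(the integral closure of `ℤ` in `K`); equivalently, for `v, w ∈ ℚ` one has
`φ(v + w·(-D + √-D)/2) ∈ R₀` if and only if `v, w ∈ ℤ`. -/
theorem preimage_of_order_is_ring_of_integers (p : ℕ) (hp : p.Prime) (μ m : ℤ) (hm : m ≠ 0)
    (D : ℤ) (hD : D = -(μ ^ 2 + 4 * p * m)) (hDpos : 0 < D)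
    (hfund : (D % 4 = 3 ∧ Squarefree D) ∨
      (4 ∣ D ∧ Squarefree (D / 4) ∧ (D / 4 % 4 = 1 ∨ D / 4 % 4 = 2)))
    (z : ℂ) (hz : z = Real.sqrt D * Complex.I)
    (K : IntermediateField ℚ ℂ) (hK : K = IntermediateField.adjoin ℚ {z})
    (zK : K) (hzK : (zK : ℂ) = z)
    (φ : K →ₐ[ℚ] Matrix (Fin 2) (Fin 2) ℚ)
    (hφ : φ zK = !![(μ : ℚ), 2; 2 * p * m, -(μ : ℚ)])
    (R₀ : Set (Matrix (Fin 2) (Fin 2) ℚ))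
    (hR₀ : R₀ = {A | (∃ n : ℤ, A 0 0 = (n : ℚ)) ∧ (∃ n : ℤ, A 0 1 = (n : ℚ)) ∧
        (∃ n : ℤ, A 1 0 = (p : ℚ) * n) ∧ (∃ n : ℤ, A 1 1 = (n : ℚ))}) :
    (⇑φ ⁻¹' R₀ = (integralClosure ℤ K : Set K)) ∧
    (∀ v w : ℚ, φ (algebraMap ℚ K v + algebraMap ℚ K w * ((algebraMap ℚ K (-D) + zK) / 2)) ∈ R₀ ↔
        ((∃ n : ℤ, v = (n : ℚ)) ∧ (∃ n : ℤ, w = (n : ℚ)))) := by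
  subst hK
  -- basic facts about z
  have hDR : (0 : ℝ) < (D : ℝ) := by exact_mod_cast hDpos
  have hsD : Real.sqrt D ≠ 0 := ne_of_gt (Real.sqrt_pos.mpr hDR)
  have hzim : z.im ≠ 0 := by
    rw [hz]
    simpa using hsD
  have hzrange : z ∉ Set.range (algebraMap ℚ ℂ) := by
    rintro ⟨q, hq⟩
    apply hzim
    rw [← hq]
    simp [Complex.ratCast_im]
  have hz2 : z ^ 2 = -((D : ℝ) : ℂ) := by
    rw [hz, mul_pow, Complex.I_sq]
    rw [show ((Real.sqrt D : ℂ)) ^ 2 = ((Real.sqrt D ^ 2 : ℝ) : ℂ) by push_cast; ring]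
    rw [Real.sq_sqrt hDR.le]
    ring
  have hz2' : z ^ 2 = algebraMap ℚ ℂ (-(D : ℚ)) := by
    rw [hz2]
    rw [eq_ratCast (algebraMap ℚ ℂ)]
    push_cast
    ring
  have hzint : IsIntegral ℚ z := by
    refine ⟨X ^ 2 + C ((D : ℚ)), monic_X_pow_add_C _ two_ne_zero, ?_⟩
    rw [eval₂_add, eval₂_pow, eval₂_X, eval₂_C, hz2']
    rw [map_neg]
    ring
  have hqdeg : (X ^ 2 + C ((D : ℚ))).natDegree = 2 := by compute_degree!
  have hdeg : (minpoly ℚ z).natDegree = 2 := by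
    refine le_antisymm ?_ ((minpoly.two_le_natDegree_iff hzint).mpr hzrange)
    rw [← hqdeg]
    refine natDegree_le_of_dvd (minpoly.dvd ℚ z ?_) (monic_X_pow_add_C _ two_ne_zero).ne_zero
    rw [map_add, map_pow, aeval_X, aeval_C, hz2', map_neg]
    ring
  -- zK is the generator
  have hzKgen : zK = IntermediateField.AdjoinSimple.gen ℚ z :=
    Subtype.ext (by rw [hzK, IntermediateField.AdjoinSimple.coe_gen])
  -- spanning
  have hspan : ∀ x : IntermediateField.adjoin ℚ {z}, ∃ v w : ℚ,
      x = algebraMap ℚ _ v + algebraMap ℚ _ w * zK := by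
    intro x
    obtain ⟨f, hfd, hfx⟩ := (IntermediateField.adjoin.powerBasis hzint).exists_eq_aeval x
    rw [IntermediateField.adjoin.powerBasis_dim, hdeg] at hfd
    obtain ⟨c1, c0, rfl⟩ :=
      Polynomial.exists_eq_X_add_C_of_natDegree_le_one (by omega : f.natDegree ≤ 1)
    refine ⟨c0, c1, ?_⟩
    rw [hfx, IntermediateField.adjoin.powerBasis_gen]
    rw [map_add, _root_.map_mul, aeval_C, aeval_C, aeval_X, hzKgen]
    exact add_comm _ _
  -- algebraic facts about zK
  have hcoe : ∀ y : IntermediateField.adjoin ℚ {z},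
      algebraMap (IntermediateField.adjoin ℚ {z}) ℂ y = (y : ℂ) := fun y => rfl
  have hzK2 : zK ^ 2 = -(D : IntermediateField.adjoin ℚ {z}) := by
    apply (algebraMap (IntermediateField.adjoin ℚ {z}) ℂ).injective
    rw [map_pow, map_neg, map_intCast, hcoe, hzK, hz2]
    push_cast
    ring
  have hzKrange : zK ∉ Set.range (algebraMap ℚ (IntermediateField.adjoin ℚ {z})) := by
    rintro ⟨q, hq⟩
    refine hzrange ⟨q, ?_⟩
    rw [IsScalarTower.algebraMap_apply ℚ (IntermediateField.adjoin ℚ {z}) ℂ, hq, hcoe, hzK]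
  -- integrality of θ
  obtain ⟨e, he⟩ : ∃ e : ℤ, D ^ 2 + D = 4 * e := by
    rcases hfund with ⟨h3, -⟩ | ⟨⟨s, hs⟩, -, -⟩
    · obtain ⟨t, ht⟩ : ∃ t, D + 1 = 4 * t := ⟨(D + 1) / 4, by omega⟩
      exact ⟨D * t, by linear_combination D * ht⟩
    · exact ⟨s * D + s, by linear_combination (D + 1) * hs⟩
  have h1 : algebraMap ℚ (IntermediateField.adjoin ℚ {z}) (-(D : ℚ)) =
      -(D : IntermediateField.adjoin ℚ {z}) := by rw [map_neg, map_intCast]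
  have hθ : ((algebraMap ℚ (IntermediateField.adjoin ℚ {z}) (-(D : ℚ)) + zK) / 2) ^ 2 +
      (D : IntermediateField.adjoin ℚ {z}) *
        ((algebraMap ℚ (IntermediateField.adjoin ℚ {z}) (-(D : ℚ)) + zK) / 2) +
      (e : IntermediateField.adjoin ℚ {z}) = 0 := by
    have he' : (D : IntermediateField.adjoin ℚ {z}) ^ 2 + (D : IntermediateField.adjoin ℚ {z}) =
        4 * (e : IntermediateField.adjoin ℚ {z}) := by exact_mod_cast he
    rw [h1]
    linear_combination hzK2 / 4 - he' / 4
  have hθint : IsIntegral ℤ ((algebraMap ℚ (IntermediateField.adjoin ℚ {z}) (-(D : ℚ)) + zK) / 2) := by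
    refine ⟨X ^ 2 + C D * X + C e, by monicity!, ?_⟩
    rw [eval₂_add, eval₂_add, eval₂_mul, eval₂_pow, eval₂_X, eval₂_C, eval₂_C]
    rw [show (algebraMap ℤ (IntermediateField.adjoin ℚ {z})) D =
      (D : IntermediateField.adjoin ℚ {z}) from map_intCast _ _]
    rw [show (algebraMap ℤ (IntermediateField.adjoin ℚ {z})) e =
      (e : IntermediateField.adjoin ℚ {z}) from map_intCast _ _]
    linear_combination hθ
  constructor
  · ext x
    obtain ⟨v, w, rfl⟩ := hspan x
    have hrepr : algebraMap ℚ (IntermediateField.adjoin ℚ {z}) v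
          + algebraMap ℚ (IntermediateField.adjoin ℚ {z}) w * zK =
        algebraMap ℚ (IntermediateField.adjoin ℚ {z}) (v + D * w)
          + algebraMap ℚ (IntermediateField.adjoin ℚ {z}) (2 * w) *
            ((algebraMap ℚ (IntermediateField.adjoin ℚ {z}) (-(D : ℚ)) + zK) / 2) := by
      have h2 : (2 : IntermediateField.adjoin ℚ {z}) ≠ 0 := two_ne_zero
      field_simp
      simp only [map_mul, map_add, map_neg, map_intCast, map_ofNat]
      ring
    rw [hrepr, Set.mem_preimage, SetLike.mem_coe, phi_mem p μ m D hD φ zK hφ R₀ hR₀ (v + D * w) (2 * w)]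
    rw [mem_integralClosure_iff]
    constructor
    · rintro ⟨⟨a, ha⟩, ⟨b, hb⟩⟩
      rw [ha, hb]
      rw [show (algebraMap ℚ (IntermediateField.adjoin ℚ {z})) ((a : ℤ) : ℚ) =
        algebraMap ℤ (IntermediateField.adjoin ℚ {z}) a by rw [map_intCast, eq_intCast]]
      rw [show (algebraMap ℚ (IntermediateField.adjoin ℚ {z})) ((b : ℤ) : ℚ) =
        algebraMap ℤ (IntermediateField.adjoin ℚ {z}) b by rw [map_intCast, eq_intCast]]
      exact (isIntegral_algebraMap).add (isIntegral_algebraMap.mul hθint)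
    · intro hx
      have hint : IsIntegral ℤ (algebraMap ℚ (IntermediateField.adjoin ℚ {z}) v
          + algebraMap ℚ (IntermediateField.adjoin ℚ {z}) w * zK) := by
        rw [hrepr]; exact hx
      obtain ⟨⟨a, ha⟩, ⟨N, hN⟩⟩ := trace_norm_int hzK2 hzKrange hint
      obtain ⟨⟨n1, h1'⟩, ⟨n2, h2'⟩⟩ := arith_core D hfund v w a N ha hN
      exact ⟨⟨n1, h1'⟩, ⟨n2, h2'⟩⟩
  · intro v w
    exact phi_mem p μ m D hD φ zK hφ R₀ hR₀ v w
end
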